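/- Let α > 0 and let the noise density be Pareto: f_ε(ε) = α(1 + ε)^{−α−1} for ε ≥ 0 and f_ε(ε) = 0 for ε < 0. Let x̄ ∈ ℝ and let μ be a Borel probability measure on ℝ with μ((−∞, x̄]) = 1. Define the posterior cdf F(w|z) := (∫_{(−∞,w]} f_ε(z − x) dμ(x)) / (∫_{(−∞,x̄]} f_ε(z − x) dμ(x)) for z ≥ x̄. Then for all z2 > z1 ≥ x̄ and all w with 0 < μ((−∞, w]) < 1: F(w|z1) < F(w|z2). That is, with Pareto (thicker-than-exponential-tailed) noise, for every pair of signals above the upper bound of X, the posterior given the lower signal strictly first-order stochastically dominates the posterior given the higher signal. -/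

import Mathlib

open MeasureTheory Set

/-- The Pareto noise density `f_ε(ε) = α(1+ε)^{−α−1}` for `ε ≥ 0`, `0` for
`ε < 0`. -/
noncomputable def paretoDen (α ε : ℝ) : ℝ :=
  if 0 ≤ ε then α * (1 + ε) ^ (-(α + 1)) else 0

/-- The posterior cdf of `X` given `Z = z` with Pareto noise. -/
noncomputable def postCdfPareto (μ : Measure ℝ) (α xbar w z : ℝ) : ℝ :=
  (∫ x in Iic w, paretoDen α (z - x) ∂μ) / (∫ x in Iic xbar, paretoDen α (z - x) ∂μ)

lemma paretoDen_nonneg {α : ℝ} (hα : 0 ≤ α) (ε : ℝ) : 0 ≤ paretoDen α ε := by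
  unfold paretoDen
  split
  · positivity
  · exact le_refl 0

lemma paretoDen_pos {α : ℝ} (hα : 0 < α) {ε : ℝ} (hε : 0 ≤ ε) : 0 < paretoDen α ε := by
  unfold paretoDen
  rw [if_pos hε]
  have h1 : (0:ℝ) < 1 + ε := by linarith
  positivity

lemma paretoDen_eq {α ε : ℝ} (hε : 0 ≤ ε) :
    paretoDen α ε = α * (1 + ε) ^ (-(α + 1)) := if_pos hε

lemma paretoDen_le {α : ℝ} (hα : 0 ≤ α) (ε : ℝ) : paretoDen α ε ≤ α := by
  unfold paretoDen
  split
  · rename_i h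
    have h1 : (1:ℝ) ≤ 1 + ε := by linarith
    have h2 : (1 + ε) ^ (-(α+1)) ≤ 1 :=
      Real.rpow_le_one_of_one_le_of_nonpos h1 (by linarith)
    calc α * (1 + ε) ^ (-(α+1)) ≤ α * 1 := by
          exact mul_le_mul_of_nonneg_left h2 hα
      _ = α := mul_one α
  · exact hα

lemma paretoDen_measurable (α : ℝ) : Measurable (paretoDen α) := by
  unfold paretoDen
  exact Measurable.ite measurableSet_Ici
    (measurable_const.mul ((measurable_const.add measurable_id).pow_const _))
    measurable_const

lemma paretoDen_integrableOn {α : ℝ} (hα : 0 ≤ α) (z : ℝ) (μ : Measure ℝ)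
    [IsProbabilityMeasure μ] (s : Set ℝ) :
    IntegrableOn (fun x => paretoDen α (z - x)) s μ := by
  have hm : Measurable (fun x : ℝ => paretoDen α (z - x)) :=
    (paretoDen_measurable α).comp (measurable_const.sub measurable_id)
  refine Measure.integrableOn_of_bounded (M := α) (measure_ne_top _ _) hm.aestronglyMeasurable ?_
  refine ae_of_all _ fun x => ?_
  rw [Real.norm_eq_abs, abs_of_nonneg (paretoDen_nonneg hα _)]
  exact paretoDen_le hα _

/-- Key cross-ratio inequality (non-strict). -/
lemma paretoDen_cross_le {α z1 z2 x y : ℝ} (hα : 0 < α) (hx : x ≤ z1) (hy : y ≤ z1)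
    (hz : z1 ≤ z2) (hxy : x ≤ y) :
    paretoDen α (z2 - y) * paretoDen α (z1 - x) ≤
      paretoDen α (z1 - y) * paretoDen α (z2 - x) := by
  have hx1 : (0:ℝ) ≤ z1 - x := by linarith
  have hx2 : (0:ℝ) ≤ z2 - x := by linarith
  have hy1 : (0:ℝ) ≤ z1 - y := by linarith
  have hy2 : (0:ℝ) ≤ z2 - y := by linarith
  rw [paretoDen_eq hx1, paretoDen_eq hx2, paretoDen_eq hy1, paretoDen_eq hy2]
  have ha : (0:ℝ) < 1 + (z1 - x) := by linarith
  have hb : (0:ℝ) < 1 + (z2 - x) := by linarith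
  have hc : (0:ℝ) < 1 + (z1 - y) := by linarith
  have hd : (0:ℝ) < 1 + (z2 - y) := by linarith
  have key : (1 + (z1 - y)) * (1 + (z2 - x)) ≤ (1 + (z2 - y)) * (1 + (z1 - x)) := by
    nlinarith [mul_nonneg (sub_nonneg.2 hxy) (sub_nonneg.2 hz)]
  have hr : ((1 + (z2 - y)) * (1 + (z1 - x))) ^ (-(α+1)) ≤
      ((1 + (z1 - y)) * (1 + (z2 - x))) ^ (-(α+1)) :=
    Real.rpow_le_rpow_of_nonpos (by positivity) key (by linarith)
  rw [Real.mul_rpow hd.le ha.le, Real.mul_rpow hc.le hb.le] at hr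
  calc α * (1 + (z2 - y)) ^ (-(α+1)) * (α * (1 + (z1 - x)) ^ (-(α+1)))
      = α * α * ((1 + (z2 - y)) ^ (-(α+1)) * (1 + (z1 - x)) ^ (-(α+1))) := by ring
    _ ≤ α * α * ((1 + (z1 - y)) ^ (-(α+1)) * (1 + (z2 - x)) ^ (-(α+1))) := by
        exact mul_le_mul_of_nonneg_left hr (by positivity)
    _ = α * (1 + (z1 - y)) ^ (-(α+1)) * (α * (1 + (z2 - x)) ^ (-(α+1))) := by ring

/-- Key cross-ratio inequality (strict). -/
lemma paretoDen_cross_lt {α z1 z2 x y : ℝ} (hα : 0 < α) (hx : x ≤ z1) (hy : y ≤ z1)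
    (hz : z1 < z2) (hxy : x < y) :
    paretoDen α (z2 - y) * paretoDen α (z1 - x) <
      paretoDen α (z1 - y) * paretoDen α (z2 - x) := by
  have hx1 : (0:ℝ) ≤ z1 - x := by linarith
  have hx2 : (0:ℝ) ≤ z2 - x := by linarith
  have hy1 : (0:ℝ) ≤ z1 - y := by linarith
  have hy2 : (0:ℝ) ≤ z2 - y := by linarith
  rw [paretoDen_eq hx1, paretoDen_eq hx2, paretoDen_eq hy1, paretoDen_eq hy2]
  have ha : (0:ℝ) < 1 + (z1 - x) := by linarith
  have hb : (0:ℝ) < 1 + (z2 - x) := by linarith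
  have hc : (0:ℝ) < 1 + (z1 - y) := by linarith
  have hd : (0:ℝ) < 1 + (z2 - y) := by linarith
  have key : (1 + (z1 - y)) * (1 + (z2 - x)) < (1 + (z2 - y)) * (1 + (z1 - x)) := by
    nlinarith [mul_pos (sub_pos.2 hxy) (sub_pos.2 hz)]
  have hr : ((1 + (z2 - y)) * (1 + (z1 - x))) ^ (-(α+1)) <
      ((1 + (z1 - y)) * (1 + (z2 - x))) ^ (-(α+1)) :=
    Real.rpow_lt_rpow_of_neg (by positivity) key (by linarith)
  rw [Real.mul_rpow hd.le ha.le, Real.mul_rpow hc.le hb.le] at hr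
  calc α * (1 + (z2 - y)) ^ (-(α+1)) * (α * (1 + (z1 - x)) ^ (-(α+1)))
      = α * α * ((1 + (z2 - y)) ^ (-(α+1)) * (1 + (z1 - x)) ^ (-(α+1))) := by ring
    _ < α * α * ((1 + (z1 - y)) ^ (-(α+1)) * (1 + (z2 - x)) ^ (-(α+1))) := by
        exact mul_lt_mul_of_pos_left hr (by positivity)
    _ = α * (1 + (z1 - y)) ^ (-(α+1)) * (α * (1 + (z2 - x)) ^ (-(α+1))) := by ring

/-- Positivity of a set integral of the Pareto density against a prior. -/
lemma paretoDen_setIntegral_pos {α z : ℝ} (hα : 0 < α) (μ : Measure ℝ)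
    [IsProbabilityMeasure μ] {s : Set ℝ} (hs : MeasurableSet s)
    (hsz : ∀ x ∈ s, x ≤ z) (hμs : 0 < μ s) :
    0 < ∫ x in s, paretoDen α (z - x) ∂μ := by
  rw [setIntegral_pos_iff_support_of_nonneg_ae
    (ae_of_all _ fun x => paretoDen_nonneg hα.le _)
    (paretoDen_integrableOn hα.le z μ s)]
  have hsub : s ⊆ Function.support (fun x => paretoDen α (z - x)) ∩ s := fun x hx =>
    ⟨ne_of_gt (paretoDen_pos hα (by linarith [hsz x hx])), hx⟩
  exact lt_of_lt_of_le hμs (measure_mono hsub)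

/-- Let `α > 0`, let the noise be Pareto with density
`f_ε(ε) = α(1+ε)^{−α−1}` on `[0,∞)`, and let `X ≤ x̄` have prior `μ`. Then
for all signals `z2 > z1 ≥ x̄` and all `w` with `0 < μ((−∞,w]) < 1`,
`F(w|z1) < F(w|z2)`: the posterior given the lower signal strictly FOSDs
the posterior given the higher signal. -/
theorem stmt_17 (α : ℝ) (hα : 0 < α) (xbar : ℝ)
    (μ : Measure ℝ) [IsProbabilityMeasure μ]
    (hμ : μ (Iic xbar) = 1) :
    ∀ z1 z2 : ℝ, xbar ≤ z1 → z1 < z2 →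
      ∀ w : ℝ, 0 < μ (Iic w) → μ (Iic w) < 1 →
        postCdfPareto μ α xbar w z1 < postCdfPareto μ α xbar w z2 := by
  intro z1 z2 hz1 hz12 w hw0 hw1
  -- w < xbar
  have hwx : w < xbar := by
    by_contra h
    push_neg at h
    have : μ (Iic xbar) ≤ μ (Iic w) := measure_mono (Iic_subset_Iic.2 h)
    rw [hμ] at this
    exact absurd (lt_of_lt_of_le hw1 this) (lt_irrefl _)
  -- abbreviations
  set f1 : ℝ → ℝ := fun x => paretoDen α (z1 - x) with hf1
  set f2 : ℝ → ℝ := fun x => paretoDen α (z2 - x) with hf2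
  set A1 := ∫ x in Iic w, f1 x ∂μ with hA1
  set A2 := ∫ x in Iic w, f2 x ∂μ with hA2
  set C1 := ∫ x in Ioc w xbar, f1 x ∂μ with hC1
  set C2 := ∫ x in Ioc w xbar, f2 x ∂μ with hC2
  have hI1w : IntegrableOn f1 (Iic w) μ := paretoDen_integrableOn hα.le z1 μ _
  have hI2w : IntegrableOn f2 (Iic w) μ := paretoDen_integrableOn hα.le z2 μ _
  have hI1o : IntegrableOn f1 (Ioc w xbar) μ := paretoDen_integrableOn hα.le z1 μ _
  have hI2o : IntegrableOn f2 (Ioc w xbar) μ := paretoDen_integrableOn hα.le z2 μ _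
  -- split the denominator
  have hsplit : ∀ f : ℝ → ℝ, IntegrableOn f (Iic w) μ → IntegrableOn f (Ioc w xbar) μ →
      ∫ x in Iic xbar, f x ∂μ = (∫ x in Iic w, f x ∂μ) + ∫ x in Ioc w xbar, f x ∂μ := by
    intro f h1 h2
    rw [← Iic_union_Ioc_eq_Iic hwx.le]
    exact setIntegral_union (Iic_disjoint_Ioc le_rfl) measurableSet_Ioc h1 h2
  -- positivity of mass above w
  have hμo : 0 < μ (Ioc w xbar) := by
    by_contra h
    push_neg at h
    have h0 : μ (Ioc w xbar) = 0 := le_antisymm h zero_le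
    have : μ (Iic xbar) ≤ μ (Iic w) + μ (Ioc w xbar) := by
      rw [← Iic_union_Ioc_eq_Iic hwx.le]
      exact measure_union_le _ _
    rw [hμ, h0, add_zero] at this
    exact absurd (lt_of_lt_of_le hw1 this) (lt_irrefl _)
  -- positivity of the integrals
  have hA1p : 0 < A1 := paretoDen_setIntegral_pos hα μ measurableSet_Iic
    (fun x hx => le_trans (le_trans (mem_Iic.1 hx) hwx.le) hz1) hw0
  have hA2p : 0 < A2 := paretoDen_setIntegral_pos hα μ measurableSet_Iic
    (fun x hx => le_trans (le_trans (mem_Iic.1 hx) hwx.le) (le_of_lt (lt_of_le_of_lt hz1 hz12))) hw0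
  have hC1p : 0 < C1 := paretoDen_setIntegral_pos hα μ measurableSet_Ioc
    (fun x hx => le_trans hx.2 hz1) hμo
  have hC2p : 0 < C2 := paretoDen_setIntegral_pos hα μ measurableSet_Ioc
    (fun x hx => le_trans hx.2 (le_of_lt (lt_of_le_of_lt hz1 hz12))) hμo
  -- values at w
  have hg1w : 0 < paretoDen α (z1 - w) := paretoDen_pos hα (by linarith)
  have hg2w : 0 < paretoDen α (z2 - w) := paretoDen_pos hα (by linarith)
  -- inequality on Iic w : paretoDen α (z2-w) * A1 ≤ paretoDen α (z1-w) * A2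
  have h1 : paretoDen α (z2 - w) * A1 ≤ paretoDen α (z1 - w) * A2 := by
    rw [hA1, hA2, ← integral_const_mul, ← integral_const_mul]
    refine setIntegral_mono_on (hI1w.const_mul _) (hI2w.const_mul _) measurableSet_Iic ?_
    intro x hx
    exact paretoDen_cross_le hα (le_trans (le_trans (mem_Iic.1 hx) hwx.le) hz1)
      (by linarith) hz12.le (mem_Iic.1 hx)
  -- strict inequality on Ioc w xbar : paretoDen α (z1-w) * C2 < paretoDen α (z2-w) * C1
  have h2 : paretoDen α (z1 - w) * C2 < paretoDen α (z2 - w) * C1 := by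
    have hpos : 0 < ∫ y in Ioc w xbar,
        (paretoDen α (z2 - w) * f1 y - paretoDen α (z1 - w) * f2 y) ∂μ := by
      have hint : IntegrableOn
          (fun y => paretoDen α (z2 - w) * f1 y - paretoDen α (z1 - w) * f2 y)
          (Ioc w xbar) μ :=
        (hI1o.const_mul (paretoDen α (z2 - w))).sub (hI2o.const_mul (paretoDen α (z1 - w)))
      rw [setIntegral_pos_iff_support_of_nonneg_ae ?_ hint]
      · refine lt_of_lt_of_le hμo (measure_mono ?_)
        intro y hy
        refine ⟨ne_of_gt ?_, hy⟩
        have := paretoDen_cross_lt hα (show w ≤ z1 by linarith) (le_trans hy.2 hz1) hz12 hy.1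
        simp only [hf1, hf2]
        linarith [this]
      · rw [Filter.EventuallyLE, ae_restrict_iff' measurableSet_Ioc]
        refine ae_of_all _ fun y hy => ?_
        have := paretoDen_cross_lt hα (show w ≤ z1 by linarith) (le_trans hy.2 hz1) hz12 hy.1
        simp only [hf1, hf2, Pi.zero_apply]
        linarith [this]
    rw [MeasureTheory.integral_sub (hI1o.const_mul (paretoDen α (z2 - w)))
        (hI2o.const_mul (paretoDen α (z1 - w))),
      integral_const_mul, integral_const_mul] at hpos
    linarith [hpos]
  -- combine
  have hkey : A1 * C2 < A2 * C1 := by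
    have e1 : paretoDen α (z1 - w) * (A1 * C2) < paretoDen α (z1 - w) * (A2 * C1) := by
      calc paretoDen α (z1 - w) * (A1 * C2) = A1 * (paretoDen α (z1 - w) * C2) := by ring
        _ < A1 * (paretoDen α (z2 - w) * C1) := by
            exact mul_lt_mul_of_pos_left h2 hA1p
        _ = C1 * (paretoDen α (z2 - w) * A1) := by ring
        _ ≤ C1 * (paretoDen α (z1 - w) * A2) := by
            exact mul_le_mul_of_nonneg_left h1 hC1p.le
        _ = paretoDen α (z1 - w) * (A2 * C1) := by ring
    exact lt_of_mul_lt_mul_left e1 hg1w.le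
  -- conclude
  unfold postCdfPareto
  rw [hsplit f1 hI1w hI1o, hsplit f2 hI2w hI2o]
  rw [div_lt_div_iff₀ (by linarith) (by linarith)]
  nlinarith [hkey]
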